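/- Let Δ be a simplicial complex on [m] and Γ a simplicial complex on N = {m+1,…,m+n}, and let Δ ⊔ Γ be the simplicial complex on [m+n] whose faces are the faces of Δ together with the faces of Γ. Under the natural identification ℝ^((Δ⊔Γ)‾) ≅ ℝ^Δ̄ × ℝ^Γ̄, one has GCut(Δ ⊔ Γ) = GCut(Δ) × GCut(Γ). Consequently, if GCut(Δ) = {x : A x ≤ a} and GCut(Γ) = {y : B y ≤ b} for matrices A, B and vectors a, b, then GCut(Δ ⊔ Γ) = {(x,y) : A x ≤ a and B y ≤ b}. -/

import Mathlib

open Finset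

/-- The index type of the nonempty faces of a simplicial complex `Δ` on a finite ground
set `α`. -/
abbrev FaceIdx {α : Type} [DecidableEq α] (Δ : Finset (Finset α)) : Type :=
  {F : Finset α // F ∈ Δ ∧ F.Nonempty}

/-- The vertex `d^S` of the generalized cut polytope. -/
noncomputable def dvec {α : Type} [DecidableEq α] (Δ : Finset (Finset α)) (S : Finset α) :
    FaceIdx Δ → ℝ :=
  fun F => if Odd ((F.val ∩ S).card) then 1 else 0

/-- under the natural identification `ℝ^((Δ⊔Γ)‾) ≅ ℝ^Δ̄ × ℝ^Γ̄`
(the nonempty faces of the disjoint union `Δ ⊔ Γ` are `Δ̄ ⊕ Γ̄`, and the vertex of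
`GCut(Δ ⊔ Γ)` for the subset `S ⊔ T` is `Sum.elim (d_Δ^S) (d_Γ^T)`), one has
`GCut(Δ ⊔ Γ) = GCut(Δ) × GCut(Γ)`; consequently the H-representations combine blockwise. -/
theorem stmt_8 (m n : ℕ) (Δ : Finset (Finset (Fin m))) (Γ : Finset (Finset (Fin n)))
    (hΔ : ∀ F ∈ Δ, ∀ G, G ⊆ F → G ∈ Δ) (hΓ : ∀ F ∈ Γ, ∀ G, G ⊆ F → G ∈ Γ)
    {ι κ : Type} [Fintype ι] [Fintype κ]
    (A : Matrix ι (FaceIdx Δ) ℝ) (a : ι → ℝ)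
    (B : Matrix κ (FaceIdx Γ) ℝ) (b : κ → ℝ)
    (hA : convexHull ℝ (Set.range (dvec Δ)) = {x | ∀ i, A.mulVec x i ≤ a i})
    (hB : convexHull ℝ (Set.range (dvec Γ)) = {y | ∀ j, B.mulVec y j ≤ b j}) :
    (convexHull ℝ {p : (FaceIdx Δ ⊕ FaceIdx Γ) → ℝ |
        ∃ S T, p = Sum.elim (dvec Δ S) (dvec Γ T)} =
      {p | (p ∘ Sum.inl) ∈ convexHull ℝ (Set.range (dvec Δ)) ∧
           (p ∘ Sum.inr) ∈ convexHull ℝ (Set.range (dvec Γ))}) ∧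
    (convexHull ℝ {p : (FaceIdx Δ ⊕ FaceIdx Γ) → ℝ |
        ∃ S T, p = Sum.elim (dvec Δ S) (dvec Γ T)} =
      {p | (∀ i, A.mulVec (p ∘ Sum.inl) i ≤ a i) ∧
           (∀ j, B.mulVec (p ∘ Sum.inr) j ≤ b j)}) := by
  set e := (LinearEquiv.sumArrowLequivProdArrow (FaceIdx Δ) (FaceIdx Γ) ℝ ℝ).symm
  have hset : {p : (FaceIdx Δ ⊕ FaceIdx Γ) → ℝ |
        ∃ S T, p = Sum.elim (dvec Δ S) (dvec Γ T)} =
      (e : ((FaceIdx Δ → ℝ) × (FaceIdx Γ → ℝ)) →ₗ[ℝ] _) ''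
        (Set.range (dvec Δ) ×ˢ Set.range (dvec Γ)) := by
    ext p
    constructor
    · rintro ⟨S, T, rfl⟩
      exact ⟨(dvec Δ S, dvec Γ T), ⟨⟨S, rfl⟩, ⟨T, rfl⟩⟩, rfl⟩
    · rintro ⟨⟨x, y⟩, ⟨⟨S, rfl⟩, ⟨T, rfl⟩⟩, rfl⟩
      exact ⟨S, T, rfl⟩
  have key : convexHull ℝ {p : (FaceIdx Δ ⊕ FaceIdx Γ) → ℝ |
        ∃ S T, p = Sum.elim (dvec Δ S) (dvec Γ T)} =
      {p | (p ∘ Sum.inl) ∈ convexHull ℝ (Set.range (dvec Δ)) ∧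
           (p ∘ Sum.inr) ∈ convexHull ℝ (Set.range (dvec Γ))} := by
    rw [hset, ← LinearMap.image_convexHull, convexHull_prod]
    ext p
    constructor
    · rintro ⟨⟨x, y⟩, ⟨hx, hy⟩, rfl⟩
      constructor
      · convert hx using 1
        ext q; rfl
      · convert hy using 1
        ext q; rfl
    · rintro ⟨h1, h2⟩
      refine ⟨(p ∘ Sum.inl, p ∘ Sum.inr), ⟨h1, h2⟩, ?_⟩
      ext q; cases q <;> rfl
  refine ⟨key, ?_⟩
  rw [key]
  ext p
  simp only [Set.mem_setOf_eq, hA, hB]
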